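/- Define the linear operator D on real polynomials by D(P) = −(1−X²)P' + X P. Then for every real polynomial Q and every natural number N, there exists a unique real polynomial P with deg P ≤ N such that (X−1)^{N+1} divides Q − D(P). -/

import Mathlib

open Polynomial

/-- The operator `D(P) = −(1−X²)P' + X P` on real polynomials. -/
noncomputable def Dop (P : Polynomial ℝ) : Polynomial ℝ :=
  -((1 - X ^ 2) * derivative P) + X * P

lemma Dop_sub (P Q : Polynomial ℝ) : Dop (P - Q) = Dop P - Dop Q := by
  simp [Dop]; ring

lemma Dop_add (P Q : Polynomial ℝ) : Dop (P + Q) = Dop P + Dop Q := by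
  simp [Dop]; ring

lemma Dop_pow_mul (k : ℕ) (U : Polynomial ℝ) :
    Dop ((X - 1) ^ k * U)
      = (X - 1) ^ k * (C (k : ℝ) * (X + 1) * U
          + (X - 1) * (X + 1) * derivative U + X * U) := by
  rcases k with _ | m
  · simp [Dop]; ring
  · unfold Dop
    rw [derivative_mul, derivative_pow]
    simp only [derivative_sub, derivative_X, derivative_one, sub_zero, mul_one,
      Nat.add_sub_cancel]
    rw [pow_succ]
    push_cast
    ring

lemma Dop_zero_of (P : Polynomial ℝ) (N : ℕ) (hdeg : P.degree ≤ (N : ℕ))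
    (hdvd : (X - 1) ^ (N + 1) ∣ Dop P) : P = 0 := by
  by_contra hP
  set k := P.rootMultiplicity 1 with hk
  set U := P /ₘ (X - C 1) ^ k with hU
  have hfac : (X - C (1:ℝ)) ^ k * U = P :=
    Polynomial.pow_mul_divByMonic_rootMultiplicity_eq P 1
  have hUeval : U.eval 1 ≠ 0 :=
    Polynomial.eval_divByMonic_pow_rootMultiplicity_ne_zero 1 hP
  have hC1 : (X - C (1:ℝ)) = X - 1 := by rw [C_1]
  rw [hC1] at hfac
  -- k ≤ N
  have hkN : k ≤ N := by
    have h1 : (X - 1 : Polynomial ℝ) ^ k ∣ P := ⟨U, hfac.symm⟩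
    have h2 := Polynomial.natDegree_le_of_dvd h1 hP
    have h3 : ((X - 1 : Polynomial ℝ) ^ k).natDegree = k := by
      rw [← hC1, natDegree_pow, natDegree_X_sub_C, mul_one]
    have h4 : P.natDegree ≤ N := natDegree_le_iff_degree_le.2 hdeg
    omega
  set B : Polynomial ℝ := C (k : ℝ) * (X + 1) * U
      + (X - 1) * (X + 1) * derivative U + X * U with hB
  have hDP : Dop P = (X - 1) ^ k * B := by rw [← hfac, Dop_pow_mul]
  have hdvd2 : (X - 1 : Polynomial ℝ) ^ (k + 1) ∣ Dop P :=
    dvd_trans (pow_dvd_pow _ (by omega)) hdvd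
  rw [hDP, pow_succ] at hdvd2
  have hX1 : (X - 1 : Polynomial ℝ) ^ k ≠ 0 := by
    apply pow_ne_zero; rw [← hC1]; exact X_sub_C_ne_zero 1
  have hdvdB : (X - 1 : Polynomial ℝ) ∣ B :=
    (mul_dvd_mul_iff_left hX1).1 hdvd2
  rw [← hC1] at hdvdB
  have hroot : B.eval 1 = 0 := dvd_iff_isRoot.1 hdvdB
  rw [hB] at hroot
  simp only [eval_add, eval_mul, eval_sub, eval_X, eval_one, eval_C, sub_self,
    zero_mul, mul_zero, one_mul] at hroot
  have : ((k : ℝ) * 2 + 1) * U.eval 1 = 0 := by linarith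
  rcases mul_eq_zero.1 this with h | h
  · have : (0:ℝ) < (k : ℝ) * 2 + 1 := by positivity
    linarith
  · exact hUeval h

lemma Dop_exists (N : ℕ) : ∀ Q : Polynomial ℝ,
    ∃ P : Polynomial ℝ, P.degree ≤ (N : ℕ) ∧ (X - 1) ^ (N + 1) ∣ (Q - Dop P) := by
  induction N with
  | zero =>
    intro Q
    refine ⟨C (Q.eval 1), degree_C_le, ?_⟩
    rw [pow_one, ← C_1]
    rw [dvd_iff_isRoot]
    simp [Dop, IsRoot]
  | succ N ih =>
    intro Q
    obtain ⟨P₀, hdeg₀, R, hR⟩ := ih Q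
    set a : ℝ := R.eval 1 / (2 * (N + 1) + 1) with ha
    refine ⟨P₀ + (X - 1) ^ (N + 1) * C a, ?_, ?_⟩
    · apply le_trans (degree_add_le _ _)
      apply max_le
      · exact le_trans hdeg₀ (by exact_mod_cast Nat.cast_le.2 (Nat.le_succ N))
      · apply le_trans (degree_mul_le _ _)
        have h1 : ((X - 1 : Polynomial ℝ) ^ (N + 1)).degree = ((N + 1 : ℕ) : WithBot ℕ) := by
          rw [← C_1, degree_pow, degree_X_sub_C]
          simp
        rw [h1]
        calc ((N + 1 : ℕ) : WithBot ℕ) + (C a).degree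
            ≤ ((N + 1 : ℕ) : WithBot ℕ) + 0 := add_le_add le_rfl degree_C_le
          _ = ((N + 1 : ℕ) : WithBot ℕ) := add_zero _
    · rw [Dop_add, Dop_pow_mul]
      have : Q - (Dop P₀ + (X - 1) ^ (N + 1) *
          (C ((N + 1 : ℕ) : ℝ) * (X + 1) * C a
            + (X - 1) * (X + 1) * derivative (C a) + X * C a))
          = (X - 1) ^ (N + 1) *
            (R - (C ((N + 1 : ℕ) : ℝ) * (X + 1) * C a + X * C a)) := by
        rw [derivative_C]
        have h2 : Q - Dop P₀ = (X - 1) ^ (N + 1) * R := hR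
        calc Q - (Dop P₀ + (X - 1) ^ (N + 1) *
              (C ((N + 1 : ℕ) : ℝ) * (X + 1) * C a + (X - 1) * (X + 1) * 0 + X * C a))
            = (Q - Dop P₀) - (X - 1) ^ (N + 1) *
              (C ((N + 1 : ℕ) : ℝ) * (X + 1) * C a + X * C a) := by ring
          _ = _ := by rw [h2]; ring
      rw [this, pow_succ]
      apply mul_dvd_mul_left
      rw [← C_1, dvd_iff_isRoot]
      have h3 : (2 * ((N : ℝ) + 1) + 1) ≠ 0 := by positivity
      simp only [IsRoot, eval_sub, eval_add, eval_mul, eval_C, eval_X, eval_one]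
      push_cast
      field_simp [ha]
      linear_combination (-(R.eval 1)) * mul_inv_cancel₀ h3

/-- For every polynomial `Q` and every `N`, there is a unique polynomial `P` of
degree at most `N` such that `D(P)` agrees with `Q` up to order `(X−1)^{N+1}`. -/
theorem Dop_approximate_inverse (Q : Polynomial ℝ) (N : ℕ) :
    ∃! P : Polynomial ℝ, P.degree ≤ (N : ℕ) ∧ (X - 1) ^ (N + 1) ∣ (Q - Dop P) := by
  obtain ⟨P, hdeg, hdvd⟩ := Dop_exists N Q
  refine ⟨P, ⟨hdeg, hdvd⟩, ?_⟩
  rintro P' ⟨hdeg', hdvd'⟩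
  have h1 : (P' - P).degree ≤ (N : ℕ) := le_trans (degree_sub_le _ _) (max_le hdeg' hdeg)
  have h2 : (X - 1 : Polynomial ℝ) ^ (N + 1) ∣ Dop (P' - P) := by
    rw [Dop_sub]
    have : Dop P' - Dop P = (Q - Dop P) - (Q - Dop P') := by ring
    rw [this]
    exact dvd_sub hdvd hdvd'
  have h3 := Dop_zero_of (P' - P) N h1 h2
  have := sub_eq_zero.1 h3
  exact this
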